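/- Let Λ ∈ ℝ^{r×r} be symmetric and let Ξ ∈ ℝ^{r×r} be symmetric positive semi-definite. If all eigenvalues of I + Ξ Λ are (real and) positive, then the continuous-time algebraic Riccati equation Λ = D^T + D + D Ξ D^T admits a symmetric solution D ∈ ℝ^{r×r}. -/

import Mathlib

open Matrix

private noncomputable def ric (t : ℝ) : ℝ :=
  if t = 0 then 1/4 else (Real.sqrt (1+t) - 1)^2 / t^2

private lemma ric_key {t : ℝ} (ht : -1 < t) :
    (1 - ric t * t) * (1 - t * ric t) = 4 * ric t := by
  rcases eq_or_ne t 0 with h | h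
  · norm_num [ric, h]
  · have h1 : (0:ℝ) ≤ 1 + t := by linarith
    have hs : Real.sqrt (1+t) ^ 2 = 1 + t := Real.sq_sqrt h1
    rw [ric, if_neg h]
    field_simp
    linear_combination ((Real.sqrt (1+t)^2 - 1 - t - 4*Real.sqrt (1+t) + 4)) * hs

private lemma riccati_aux {r : ℕ} (Λ S U : Matrix (Fin r) (Fin r) ℝ) (ev : Fin r → ℝ)
    (hΛ : Λᵀ = Λ) (hSt : Sᵀ = S)
    (hUU : star U * U = 1) (hUU' : U * star U = 1)
    (hAspec : S * Λ * S = U * diagonal ev * star U)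
    (heig : ∀ μ ∈ spectrum ℂ ((1 + (S * S) * Λ).map (algebraMap ℝ ℂ)), μ.im = 0 ∧ 0 < μ.re) :
    ∃ D : Matrix (Fin r) (Fin r) ℝ, Dᵀ = D ∧ Λ = Dᵀ + D + D * (S * S) * Dᵀ := by
  classical
  have hstarU : star U = Uᵀ := by
    rw [Matrix.star_eq_conjTranspose, conjTranspose_eq_transpose_of_trivial]
  -- eigenvalues greater than -1
  have hev_gt : ∀ i, -1 < ev i := by
    intro i
    rcases eq_or_ne (ev i) 0 with h | h
    · rw [h]; norm_num
    · set u : Fin r → ℝ := U *ᵥ Pi.single i 1 with hu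
      have hsingle : Pi.single i (ev i) = ev i • (Pi.single i 1 : Fin r → ℝ) := by
        funext j
        rcases eq_or_ne j i with rfl | hj
        · simp
        · simp [Pi.single_eq_of_ne hj]
      have hAu : (S * Λ * S) *ᵥ u = ev i • u := by
        rw [hu, mulVec_mulVec, hAspec, Matrix.mul_assoc (U * diagonal ev), hUU,
          Matrix.mul_one, ← mulVec_mulVec, diagonal_mulVec_single, mul_one, hsingle,
          mulVec_smul]
      have hune : u ≠ 0 := by
        intro hc
        have h2 : star U *ᵥ u = Pi.single i 1 := by
          rw [hu, mulVec_mulVec, hUU, one_mulVec]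
        rw [hc, mulVec_zero] at h2
        have := congrFun h2 i
        simp at this
      set w : Fin r → ℝ := S *ᵥ u with hw
      have hcomm : (S * S) * Λ * S = S * (S * Λ * S) := by noncomm_ring
      have hwv : ((S * S) * Λ) *ᵥ w = ev i • w := by
        rw [hw, mulVec_mulVec, hcomm, ← mulVec_mulVec, hAu, mulVec_smul]
      have hwne : w ≠ 0 := by
        intro hc
        have hAu' : (S * Λ * S) *ᵥ u = 0 := by
          have h3 : (S * Λ) *ᵥ w = (S * Λ * S) *ᵥ u := by rw [hw, mulVec_mulVec]
          rw [← h3, hc, mulVec_zero]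
        rw [hAu] at hAu'
        rcases smul_eq_zero.mp hAu' with h' | h'
        · exact h h'
        · exact hune h'
      have h1 : (1 + (S * S) * Λ) *ᵥ w = (1 + ev i) • w := by
        rw [add_mulVec, one_mulVec, hwv, add_smul, one_smul]
      have hmem : (algebraMap ℝ ℂ (1 + ev i)) ∈
          spectrum ℂ ((1 + (S * S) * Λ).map (algebraMap ℝ ℂ)) := by
        rw [spectrum.mem_iff]
        intro hunit
        rw [Matrix.isUnit_iff_isUnit_det] at hunit
        have hdet : (algebraMap ℂ (Matrix (Fin r) (Fin r) ℂ) (algebraMap ℝ ℂ (1 + ev i))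
            - (1 + (S * S) * Λ).map (algebraMap ℝ ℂ)).det = 0 := by
          rw [← Matrix.exists_mulVec_eq_zero_iff]
          refine ⟨fun j => algebraMap ℝ ℂ (w j), ?_, ?_⟩
          · intro hc
            apply hwne
            funext j
            have := congrFun hc j
            simpa using this
          · funext j
            have hmv : ((1 + (S * S) * Λ).map (algebraMap ℝ ℂ) *ᵥ
                (fun j => algebraMap ℝ ℂ (w j))) j
                = algebraMap ℝ ℂ (((1 + (S * S) * Λ) *ᵥ w) j) := by
              rw [RingHom.map_mulVec]
              rfl
            simp only [sub_mulVec, Pi.sub_apply, hmv, h1, Pi.zero_apply]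
            rw [Algebra.algebraMap_eq_smul_one, smul_mulVec, one_mulVec]
            simp [Pi.smul_apply, smul_eq_mul, mul_comm]
        exact (hunit.ne_zero) hdet
      have h2 := (heig _ hmem).2
      have hre : (algebraMap ℝ ℂ (1 + ev i)).re = 1 + ev i := by simp
      rw [hre] at h2
      linarith
  -- functional calculus
  have hdiagmul : ∀ (a b : Fin r → ℝ),
      (U * diagonal a * star U) * (U * diagonal b * star U)
        = U * diagonal (fun i => a i * b i) * star U := by
    intro a b
    simp only [Matrix.mul_assoc]
    rw [← Matrix.mul_assoc (star U) U (diagonal b * star U), hUU, Matrix.one_mul,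
      ← Matrix.mul_assoc (diagonal a) (diagonal b) (star U), diagonal_mul_diagonal]
  have hone : (1 : Matrix (Fin r) (Fin r) ℝ) = U * diagonal (fun _ => 1) * star U := by
    rw [diagonal_one, Matrix.mul_one, hUU']
  obtain ⟨X, hXt, key⟩ : ∃ X : Matrix (Fin r) (Fin r) ℝ, Xᵀ = X ∧
      (1 - X * (S * Λ * S)) * (1 - (S * Λ * S) * X) = (4:ℝ) • X := by
    refine ⟨U * diagonal (fun i => ric (ev i)) * star U, ?_, ?_⟩
    · rw [hstarU, transpose_mul, transpose_mul, transpose_transpose,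
        diagonal_transpose, Matrix.mul_assoc]
    · have hXA : (U * diagonal (fun i => ric (ev i)) * star U) * (S * Λ * S)
          = U * diagonal (fun i => ric (ev i) * ev i) * star U := by
        rw [hAspec, hdiagmul]
      have hAX : (S * Λ * S) * (U * diagonal (fun i => ric (ev i)) * star U)
          = U * diagonal (fun i => ev i * ric (ev i)) * star U := by
        rw [hAspec, hdiagmul]
      have hsub1 : 1 - (U * diagonal (fun i => ric (ev i)) * star U) * (S * Λ * S)
          = U * diagonal (fun i => 1 - ric (ev i) * ev i) * star U := by
        rw [hXA]
        nth_rewrite 1 [hone]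
        rw [← Matrix.sub_mul, ← Matrix.mul_sub, diagonal_sub]
      have hsub2 : 1 - (S * Λ * S) * (U * diagonal (fun i => ric (ev i)) * star U)
          = U * diagonal (fun i => 1 - ev i * ric (ev i)) * star U := by
        rw [hAX]
        nth_rewrite 1 [hone]
        rw [← Matrix.sub_mul, ← Matrix.mul_sub, diagonal_sub]
      rw [hsub1, hsub2, hdiagmul]
      have heq : (fun i => (1 - ric (ev i) * ev i) * (1 - ev i * ric (ev i)))
          = (4:ℝ) • (fun i => ric (ev i)) := by
        funext i
        have := ric_key (hev_gt i)
        simpa using this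
      rw [heq, diagonal_smul, Matrix.mul_smul, Matrix.smul_mul]
  -- the solution
  set C : Matrix (Fin r) (Fin r) ℝ := Λ - Λ * S * X * S * Λ with hCdef
  have hCt : Cᵀ = C := by
    rw [hCdef, transpose_sub, hΛ]
    congr 1
    rw [transpose_mul, transpose_mul, transpose_mul, transpose_mul, hSt, hΛ, hXt]
    noncomm_ring
  have hCS : C * S = Λ * S * (1 - X * (S * Λ * S)) := by
    rw [hCdef]; noncomm_ring
  have hSC : S * C = (1 - (S * Λ * S) * X) * (S * Λ) := by
    rw [hCdef]; noncomm_ring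
  have hCXC : C * (S * S) * C = (4:ℝ) • (Λ * S * X * S * Λ) := by
    calc C * (S * S) * C = (C * S) * (S * C) := by noncomm_ring
    _ = Λ * S * ((1 - X * (S * Λ * S)) * (1 - (S * Λ * S) * X)) * (S * Λ) := by
        rw [hCS, hSC]; noncomm_ring
    _ = Λ * S * ((4:ℝ) • X) * (S * Λ) := by rw [key]
    _ = (4:ℝ) • (Λ * S * X * S * Λ) := by
        rw [Matrix.mul_smul, Matrix.smul_mul]
        congr 1
        noncomm_ring
  refine ⟨(1/2 : ℝ) • C, ?_, ?_⟩
  · rw [transpose_smul, hCt]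
  · rw [transpose_smul, hCt]
    have hprod : ((1/2 : ℝ) • C) * (S * S) * ((1/2 : ℝ) • C) = Λ * S * X * S * Λ := by
      rw [Matrix.smul_mul, Matrix.smul_mul, Matrix.mul_smul, smul_smul, hCXC, smul_smul]
      norm_num
    rw [hprod, ← add_smul]
    norm_num
    rw [hCdef]
    abel

theorem riccati_symmetric_solution {r : ℕ}
    (Λ Ξ : Matrix (Fin r) (Fin r) ℝ)
    (hΛ : Λᵀ = Λ) (hΞ : Ξ.PosSemidef)
    (heig : ∀ μ ∈ spectrum ℂ ((1 + Ξ * Λ).map (algebraMap ℝ ℂ)), μ.im = 0 ∧ 0 < μ.re) :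
    ∃ D : Matrix (Fin r) (Fin r) ℝ, Dᵀ = D ∧ Λ = Dᵀ + D + D * Ξ * Dᵀ := by
  classical
  obtain ⟨S, hSt, hSS⟩ : ∃ S : Matrix (Fin r) (Fin r) ℝ, Sᵀ = S ∧ S * S = Ξ := by
    open scoped MatrixOrder in
    obtain ⟨X, hX, -, hXX⟩ := CFC.exists_sqrt_of_isSelfAdjoint_of_quasispectrumRestricts
      hΞ.isHermitian (QuasispectrumRestricts.nnreal_of_nonneg hΞ.nonneg)
    refine ⟨X, ?_, hXX⟩
    rw [← conjTranspose_eq_transpose_of_trivial]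
    exact hX
  subst hSS
  have hAherm : (S * Λ * S).IsHermitian := by
    unfold Matrix.IsHermitian
    rw [conjTranspose_eq_transpose_of_trivial, transpose_mul, transpose_mul, hSt, hΛ,
      Matrix.mul_assoc]
  obtain ⟨U, ev, hUU, hUU', hAspec⟩ : ∃ (U : Matrix (Fin r) (Fin r) ℝ) (ev : Fin r → ℝ),
      star U * U = 1 ∧ U * star U = 1 ∧ S * Λ * S = U * diagonal ev * star U :=
    ⟨hAherm.eigenvectorUnitary, hAherm.eigenvalues,
      Unitary.coe_star_mul_self hAherm.eigenvectorUnitary,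
      Unitary.coe_mul_star_self hAherm.eigenvectorUnitary,
      by simpa using hAherm.spectral_theorem⟩
  exact riccati_aux Λ S U ev hΛ hSt hUU hUU' hAspec heig
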